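/- Let d be a positive integer, ρ a positive semi-definite complex d×d matrix, L a Hermitian d×d matrix, and {Π_x}_{x=1}^n a finite POVM, i.e. each Π_x is positive semi-definite and Σ_x Π_x = I. Then Σ_{x : tr(ρΠ_x) ≠ 0} [Re tr(ρ L Π_x)]² / tr(ρ Π_x) ≤ tr(L ρ L). (This is the chain of inequalities at the heart of the Braunstein–Caves theorem: the Fisher information of any regular measurement is bounded by the quantum Fisher information tr(ρ L²) when L is the symmetric logarithmic derivative.) -/

import Mathlib

open Matrix Finset
open scoped ComplexOrder ComplexInnerProductSpace MatrixOrder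

noncomputable def matVec {d : ℕ} (A : Matrix (Fin d) (Fin d) ℂ) :
    EuclideanSpace ℂ (Fin d × Fin d) := WithLp.toLp 2 (fun p : Fin d × Fin d => A p.2 p.1)

lemma trace_eq_inner {d : ℕ} (A B : Matrix (Fin d) (Fin d) ℂ) :
    (Aᴴ * B).trace = ⟪matVec A, matVec B⟫ := by
  rw [PiLp.inner_apply]
  simp only [RCLike.inner_apply, matVec, PiLp.toLp_apply]
  rw [Matrix.trace]
  simp only [Matrix.diag_apply, Matrix.mul_apply, Matrix.conjTranspose_apply]
  rw [← Finset.sum_product']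
  rw [Finset.univ_product_univ]; exact Finset.sum_congr rfl (fun _ _ => mul_comm _ _)

lemma trace_self_re_nonneg {d : ℕ} (A : Matrix (Fin d) (Fin d) ℂ) :
    0 ≤ (Aᴴ * A).trace.re := by
  rw [trace_eq_inner]
  exact inner_self_nonneg (𝕜 := ℂ)

lemma trace_self_im {d : ℕ} (A : Matrix (Fin d) (Fin d) ℂ) :
    (Aᴴ * A).trace.im = 0 := by
  rw [trace_eq_inner]
  exact inner_self_im (𝕜 := ℂ) _

lemma trace_CS {d : ℕ} (A B : Matrix (Fin d) (Fin d) ℂ) :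
    ((Aᴴ * B).trace.re) ^ 2 ≤ (Aᴴ * A).trace.re * (Bᴴ * B).trace.re := by
  have h := inner_mul_inner_self_le (𝕜 := ℂ) (matVec A) (matVec B)
  rw [← trace_eq_inner, ← trace_eq_inner, ← trace_eq_inner, ← trace_eq_inner] at h
  have h2 : ‖(Bᴴ * A).trace‖ = ‖(Aᴴ * B).trace‖ := by
    rw [trace_eq_inner, trace_eq_inner, ← inner_conj_symm]
    exact RCLike.norm_conj _
  rw [h2, ← sq] at h
  calc ((Aᴴ * B).trace.re) ^ 2 ≤ ‖(Aᴴ * B).trace‖ ^ 2 := by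
        have := Complex.abs_re_le_norm (Aᴴ * B).trace
        calc ((Aᴴ * B).trace.re) ^ 2 = |(Aᴴ * B).trace.re| ^ 2 := (sq_abs _).symm
          _ ≤ ‖(Aᴴ * B).trace‖ ^ 2 := by
              apply pow_le_pow_left₀ (abs_nonneg _) _ 2
              simpa using this
    _ ≤ _ := h

/-- **Braunstein–Caves inequality.** For a positive semi-definite state `ρ`, a Hermitian
symmetric logarithmic derivative `L`, and a finite POVM `P` (positive semi-definite operators
summing to the identity), the classical Fisher information
`Σ_{x : tr(ρ Π_x) ≠ 0} (Re tr(ρ L Π_x))² / tr(ρ Π_x)` is bounded by `tr(L ρ L)`. -/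
theorem braunstein_caves_bound {d n : ℕ} (hd : 0 < d)
    (ρ L : Matrix (Fin d) (Fin d) ℂ)
    (hρ : ρ.PosSemidef) (hL : L.IsHermitian)
    (P : Fin n → Matrix (Fin d) (Fin d) ℂ)
    (hP : ∀ x, (P x).PosSemidef)
    (hPsum : ∑ x, P x = 1) :
    ∑ x ∈ Finset.univ.filter (fun x => (ρ * P x).trace ≠ 0),
        ((ρ * L * P x).trace.re) ^ 2 / ((ρ * P x).trace.re)
      ≤ ((L * ρ * L).trace).re := by
  set S := CFC.sqrt ρ with hSdef
  have hS : S * S = ρ := CFC.sqrt_mul_sqrt_self ρ hρ.nonneg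
  have hSH : Sᴴ = S := (CFC.sqrt_nonneg ρ).posSemidef.1
  -- per-x facts
  have key : ∀ x : Fin n,
      0 ≤ (L * ρ * L * P x).trace.re ∧
      ((ρ * L * P x).trace.re) ^ 2 ≤ (ρ * P x).trace.re * (L * ρ * L * P x).trace.re ∧
      0 ≤ (ρ * P x).trace.re ∧ (ρ * P x).trace.im = 0 := by
    intro x
    set Q := CFC.sqrt (P x) with hQdef
    have hQ : Q * Q = P x := CFC.sqrt_mul_sqrt_self (P x) (hP x).nonneg
    have hQH : Qᴴ = Q := (CFC.sqrt_nonneg (P x)).posSemidef.1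
    set A := Q * S with hAdef
    set B := Q * (L * S) with hBdef
    have tA : (Aᴴ * A).trace = (ρ * P x).trace := by
      rw [hAdef, conjTranspose_mul, hSH, hQH,
        show S * Q * (Q * S) = (S * Q * Q) * S by noncomm_ring, trace_mul_comm,
        show S * (S * Q * Q) = (S * S) * (Q * Q) by noncomm_ring, hS, hQ]
    have tB : (Aᴴ * B).trace.re = (ρ * L * P x).trace.re := by
      have e1 : (Aᴴ * B).trace = (ρ * (P x * L)).trace := by
        rw [hAdef, hBdef, conjTranspose_mul, hSH, hQH,
          show S * Q * (Q * (L * S)) = (S * Q * Q * L) * S by noncomm_ring, trace_mul_comm,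
          show S * (S * Q * Q * L) = (S * S) * ((Q * Q) * L) by noncomm_ring, hS, hQ]
      have e2 : (ρ * (P x * L)).trace = ((ρ * L * P x)ᴴ).trace := by
        rw [conjTranspose_mul, conjTranspose_mul, hρ.1, hL.eq, (hP x).1,
          show P x * (L * ρ) = (P x * L) * ρ by noncomm_ring, trace_mul_comm]
      rw [e1, e2, Matrix.trace_conjTranspose]
      exact Complex.conj_re _
    have tC : (Bᴴ * B).trace = (L * ρ * L * P x).trace := by
      rw [hBdef, conjTranspose_mul, conjTranspose_mul, hSH, hQH, hL.eq,
        show S * L * Q * (Q * (L * S)) = (S * L * Q * Q * L) * S by noncomm_ring,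
        trace_mul_comm,
        show S * (S * L * Q * Q * L) = (S * S * L) * (Q * Q * L) by noncomm_ring,
        trace_mul_comm,
        show (Q * Q * L) * (S * S * L) = (Q * Q) * (L * (S * S) * L) by noncomm_ring,
        hS, hQ, trace_mul_comm]
    refine ⟨?_, ?_, ?_, ?_⟩
    · rw [← tC]; exact trace_self_re_nonneg B
    · have := trace_CS A B
      rw [tA, tB, tC] at this
      exact this
    · rw [← tA]; exact trace_self_re_nonneg A
    · rw [← tA]; exact trace_self_im A
  have hsum : ∑ x, (L * ρ * L * P x).trace.re = (L * ρ * L).trace.re := by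
    rw [← Complex.re_sum]
    congr 1
    rw [← Matrix.trace_sum, ← Finset.mul_sum, hPsum, mul_one]
  calc ∑ x ∈ Finset.univ.filter (fun x => (ρ * P x).trace ≠ 0),
        ((ρ * L * P x).trace.re) ^ 2 / ((ρ * P x).trace.re)
      ≤ ∑ x ∈ Finset.univ.filter (fun x => (ρ * P x).trace ≠ 0),
        (L * ρ * L * P x).trace.re := by
        apply Finset.sum_le_sum
        intro x hx
        have hne := (Finset.mem_filter.mp hx).2
        obtain ⟨h1, h2, h3, h4⟩ := key x
        have hpos : 0 < (ρ * P x).trace.re := by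
          rcases lt_or_eq_of_le h3 with h | h
          · exact h
          · exact absurd (Complex.ext h.symm h4) hne
        rw [div_le_iff₀ hpos]
        calc ((ρ * L * P x).trace.re) ^ 2 ≤ (ρ * P x).trace.re * (L * ρ * L * P x).trace.re := h2
          _ = (L * ρ * L * P x).trace.re * (ρ * P x).trace.re := mul_comm _ _
    _ ≤ ∑ x, (L * ρ * L * P x).trace.re := by
        apply Finset.sum_le_sum_of_subset_of_nonneg (Finset.filter_subset _ _)
        intro x _ _
        exact (key x).1
    _ = _ := hsum
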